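/- Let H be a finitely generated abelian group of rank r (the minimal number of cyclic summands), and let τ be the smallest elementary divisor of the torsion subgroup T of H (with τ = 0 if T = 0). Then the r-th exterior power Λ^r H is cyclic of order τ if T ≠ 0, and is infinite cyclic if T = 0. Moreover, if x_1, …, x_r generate H, then x_1 ∧ ⋯ ∧ x_r generates Λ^r H. -/

import Mathlib

open ExteriorAlgebra

lemma aux_wedge_span {R M : Type*} [CommRing R] [AddCommGroup M] [Module R M] {n : ℕ}
    (x : Fin n → M) (hx : Submodule.span R (Set.range x) = ⊤) :
    Submodule.span R {(ExteriorAlgebra.ιMulti R n x : ExteriorAlgebra R M)} = ⋀[R]^n M := by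
  apply le_antisymm
  · rw [Submodule.span_le, Set.singleton_subset_iff]
    exact ExteriorAlgebra.ιMulti_range R n ⟨x, rfl⟩
  · rw [← ExteriorAlgebra.ιMulti_span_fixedDegree, Submodule.span_le]
    rintro _ ⟨v, rfl⟩
    have hv : ∀ j, ∃ c : Fin n → R, ∑ i, c i • x i = v j := fun j => by
      rw [← Submodule.mem_span_range_iff_exists_fun, hx]; trivial
    choose c hc using hv
    have h1 : (ExteriorAlgebra.ιMulti R n) v
        = (ExteriorAlgebra.ιMulti R n) (fun j => ∑ i, c j i • x i) := by
      congr 1; exact funext fun j => (hc j).symm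
    rw [h1]
    have h2 : (ExteriorAlgebra.ιMulti R n) (fun j => ∑ i, c j i • x i)
        = ∑ d : Fin n → Fin n, (∏ j, c j (d j)) •
            (ExteriorAlgebra.ιMulti R n) (fun j => x (d j)) := by
      rw [show ((ExteriorAlgebra.ιMulti R n) (fun j => ∑ i, c j i • x i))
          = (ExteriorAlgebra.ιMulti R n).toMultilinearMap (fun j => ∑ i, c j i • x i) from rfl,
        MultilinearMap.map_sum]
      refine Finset.sum_congr rfl fun d _ => ?_
      exact (ExteriorAlgebra.ιMulti R n).toMultilinearMap.map_smul_univ _ _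
    rw [h2]
    refine Submodule.sum_mem _ fun d _ => Submodule.smul_mem _ _ ?_
    by_cases hd : Function.Injective d
    · have hbij : Function.Bijective d := Finite.injective_iff_bijective.mp hd
      set σ := Equiv.ofBijective d hbij with hσ
      have : (fun j => x (d j)) = x ∘ σ := rfl
      rw [this, AlternatingMap.map_perm, Units.smul_def]
      exact Submodule.smul_of_tower_mem _ _ (Submodule.mem_span_singleton_self _)
    · have : ¬ Function.Injective (fun j => x (d j)) := fun h => hd h.of_comp
      rw [AlternatingMap.map_eq_zero_of_not_injective _ _ this]
      exact Submodule.zero_mem _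

theorem stmt_0 (f t : ℕ) (τ : Fin t → ℕ) (hτ : ∀ i, 1 < τ i)
    (hdvd : ∀ i j : Fin t, i ≤ j → τ i ∣ τ j)
    (H : Type) [AddCommGroup H]
    (e : H ≃+ ((Fin f → ℤ) × ((i : Fin t) → ZMod (τ i)))) :
    ∃ θ : ExteriorAlgebra ℤ H,
      θ ∈ ⋀[ℤ]^(f + t) H ∧
      Submodule.span ℤ {θ} = ⋀[ℤ]^(f + t) H ∧
      addOrderOf θ = (if h : t = 0 then 0 else τ ⟨0, Nat.pos_of_ne_zero h⟩) ∧
      ∀ x : Fin (f + t) → H, Submodule.span ℤ (Set.range x) = ⊤ →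
        Submodule.span ℤ {(ExteriorAlgebra.ιMulti ℤ (f + t) x : ExteriorAlgebra ℤ H)} =
          ⋀[ℤ]^(f + t) H := by
  classical
  set m : ℕ := (if h : t = 0 then 0 else τ ⟨0, Nat.pos_of_ne_zero h⟩) with hm_def
  have hm : ∀ j : Fin t, m ∣ τ j := by
    intro j
    have ht : t ≠ 0 := (Fin.pos j).ne'
    rw [hm_def, dif_neg ht]
    exact hdvd ⟨0, Nat.pos_of_ne_zero ht⟩ j (by simp [Fin.le_def])
  set E : H ≃ₗ[ℤ] ((Fin f → ℤ) × ((i : Fin t) → ZMod (τ i))) := e.toIntLinearEquiv with hE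
  -- generators
  set y : Fin f ⊕ Fin t → ((Fin f → ℤ) × ((i : Fin t) → ZMod (τ i))) :=
    Sum.elim (fun i => (Pi.single i 1, 0)) (fun j => (0, Pi.single j 1)) with hy_def
  set x₀ : Fin (f + t) → H := fun k => E.symm (y (finSumFinEquiv.symm k)) with hx₀_def
  -- y spans P
  have hyspan : Submodule.span ℤ (Set.range y) = ⊤ := by
    rw [Submodule.eq_top_iff']
    rintro ⟨a, b⟩
    show ((a, b) : (Fin f → ℤ) × ((i : Fin t) → ZMod (τ i))) ∈ _
    have h1 : ((a, b) : (Fin f → ℤ) × ((i : Fin t) → ZMod (τ i))) = (∑ i, a i • y (Sum.inl i)) + ∑ j, ((b j).val : ℤ) • y (Sum.inr j) := by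
      have hfst : a = ∑ i, a i • Pi.single i (1 : ℤ) := by
        funext l
        rw [Finset.sum_apply, Finset.sum_eq_single l]
        · simp
        · intro i _ hne
          simp [Pi.single_eq_of_ne (Ne.symm hne)]
        · simp
      have hsnd : b = ∑ j, ((b j).val : ℤ) • Pi.single j (1 : ZMod (τ j)) := by
        funext l
        rw [Finset.sum_apply, Finset.sum_eq_single l]
        · haveI : NeZero (τ l) := ⟨by have := hτ l; omega⟩
          rw [Pi.smul_apply, Pi.single_eq_same, zsmul_one, Int.cast_natCast]
          exact (ZMod.natCast_rightInverse (b l)).symm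
        · intro j _ hne
          simp [Pi.single_eq_of_ne (Ne.symm hne)]
        · simp
      refine Prod.ext ?_ ?_ <;>
        simp only [hy_def, Sum.elim_inl, Sum.elim_inr, Prod.fst_add, Prod.snd_add,
          Prod.fst_sum, Prod.snd_sum, Prod.smul_fst, Prod.smul_snd, smul_zero,
          Finset.sum_const_zero, add_zero, zero_add]
      · exact hfst
      · exact hsnd
    rw [h1]
    refine Submodule.add_mem _ ?_ ?_ <;>
      refine Submodule.sum_mem _ fun i _ => Submodule.smul_mem _ _ (Submodule.subset_span ⟨_, rfl⟩)
  have hx₀span : Submodule.span ℤ (Set.range x₀) = ⊤ := by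
    have hr : Set.range x₀ = E.symm '' (Set.range y) := by
      ext z
      constructor
      · rintro ⟨k, rfl⟩; exact ⟨y (finSumFinEquiv.symm k), ⟨_, rfl⟩, rfl⟩
      · rintro ⟨_, ⟨s, rfl⟩, rfl⟩; exact ⟨finSumFinEquiv s, by simp [hx₀_def]⟩
    rw [hr, ← LinearEquiv.coe_coe, ← Submodule.map_span, hyspan, Submodule.map_top]
    exact LinearEquiv.range _
  set θ : ExteriorAlgebra ℤ H := ExteriorAlgebra.ιMulti ℤ (f + t) x₀ with hθ
  -- linear functional via determinant
  set g0 : ((Fin f → ℤ) × ((i : Fin t) → ZMod (τ i))) →+ (Fin f ⊕ Fin t → ZMod m) := AddMonoidHom.mk'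
    (fun p => Sum.elim (fun i => ((p.1 i : ℤ) : ZMod m)) (fun j => ZMod.castHom (hm j) (ZMod m) (p.2 j)))
    (by intro p q; funext s; cases s <;>
      simp [Prod.fst_add, Prod.snd_add, ZMod.cast_add (hm _)]) with hg0
  set φ : H →ₗ[ℤ] (Fin (f + t) → ZMod m) :=
    (AddMonoidHom.mk' (fun h => fun k => g0 (e h) (finSumFinEquiv.symm k))
      (by intro a b; funext k; simp)).toIntLinearMap with hφ
  set D := (Matrix.detRowAlternating : (Fin (f + t) → ZMod m) [⋀^Fin (f + t)]→ₗ[ZMod m] ZMod m)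
    with hD
  set A : H [⋀^Fin (f + t)]→ₗ[ℤ] ZMod m :=
    { toMultilinearMap := (D.toMultilinearMap.restrictScalars ℤ).compLinearMap (fun _ => φ),
      map_eq_zero_of_eq' := by
        intro v i j hv hij
        exact D.map_eq_zero_of_eq _ (by simp [hv]) hij } with hA
  set F : ExteriorAlgebra ℤ H →ₗ[ℤ] ZMod m :=
    ExteriorAlgebra.liftAlternating
      (Function.update (fun i => (0 : H [⋀^Fin i]→ₗ[ℤ] ZMod m)) (f + t) A) with hF
  have hFι : ∀ v : Fin (f + t) → H, F (ExteriorAlgebra.ιMulti ℤ (f + t) v) = A v := by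
    intro v
    rw [hF, ExteriorAlgebra.liftAlternating_apply_ιMulti, Function.update_self]
  -- the matrix of x₀ is the identity
  have hmat : (Matrix.of fun k k' => φ (x₀ k) k') = (1 : Matrix (Fin (f+t)) (Fin (f+t)) (ZMod m)) := by
    ext k k'
    obtain ⟨s, rfl⟩ := finSumFinEquiv.surjective k
    obtain ⟨s', rfl⟩ := finSumFinEquiv.surjective k'
    have hval : ∀ s : Fin f ⊕ Fin t, φ (x₀ (finSumFinEquiv s)) = g0 (y s) ∘ finSumFinEquiv.symm := by
      intro s
      have h1 : x₀ (finSumFinEquiv s) = E.symm (y s) := by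
        rw [hx₀_def]; simp only [Equiv.symm_apply_apply]
      funext k''
      rw [h1]
      show g0 (e (E.symm (y s))) (finSumFinEquiv.symm k'') = _
      have h2 : e (E.symm (y s)) = y s := e.apply_symm_apply (y s)
      rw [h2]
      rfl
    rw [Matrix.of_apply, hval, Function.comp_apply, Equiv.symm_apply_apply, Matrix.one_apply]
    simp only [EmbeddingLike.apply_eq_iff_eq]
    cases s <;> cases s' <;>
      simp only [hy_def, hg0, AddMonoidHom.mk'_apply, Sum.elim_inl, Sum.elim_inr] <;>
      [skip; simp; simp; skip]
    · rename_i i i'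
      rcases eq_or_ne i i' with h | h
      · subst h; simp
      · simp [h, Pi.single_eq_of_ne (Ne.symm h)]
    · rename_i j j'
      rcases eq_or_ne j j' with h | h
      · subst h; simp [ZMod.cast_one (hm _)]
      · simp [h, Pi.single_eq_of_ne (Ne.symm h)]
  have hFθ : F θ = 1 := by
    rw [hθ, hFι]
    have : A x₀ = D (fun k => φ (x₀ k)) := rfl
    rw [this, hD]
    have : (fun k => φ (x₀ k)) = (1 : Matrix (Fin (f+t)) (Fin (f+t)) (ZMod m)) := by
      funext k k'; exact congrFun (congrFun hmat k) k'
    rw [show (Matrix.detRowAlternating (fun k => φ (x₀ k)) : ZMod m)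
        = Matrix.det (Matrix.of fun k k' => φ (x₀ k) k') from rfl, hmat, Matrix.det_one]
  -- m • θ = 0
  have hsmul : m • θ = 0 := by
    by_cases ht : t = 0
    · have : m = 0 := by rw [hm_def, dif_pos ht]
      rw [this, zero_smul]
    · set j0 : Fin t := ⟨0, Nat.pos_of_ne_zero ht⟩ with hj0
      set k₀ : Fin (f + t) := finSumFinEquiv (Sum.inr j0) with hk₀
      have hmj : m = τ j0 := by rw [hm_def, dif_neg ht]
      have hz : (m : ℤ) • x₀ k₀ = 0 := by
        rw [hx₀_def, hk₀]
        simp only [Equiv.symm_apply_apply]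
        rw [← map_smul]
        have : (m : ℤ) • y (Sum.inr j0) = 0 := by
          simp only [hy_def, Sum.elim_inr, Prod.smul_mk, smul_zero]
          have : (m : ℤ) • (Pi.single j0 1 : (i : Fin t) → ZMod (τ i)) = 0 := by
            funext l
            by_cases h : l = j0
            · subst h
              simp only [Pi.smul_apply, Pi.single_eq_same, Pi.zero_apply, zsmul_one]
              rw [hmj]
              push_cast
              exact ZMod.natCast_self _
            · simp [Pi.single_eq_of_ne h]
          rw [this]
          rfl
        rw [this, map_zero]
      have : (m : ℤ) • θ = 0 := by
        rw [hθ]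
        calc (m : ℤ) • (ExteriorAlgebra.ιMulti ℤ (f + t)) x₀
            = (m : ℤ) • (ExteriorAlgebra.ιMulti ℤ (f + t)) (Function.update x₀ k₀ (x₀ k₀)) := by
              rw [Function.update_eq_self]
          _ = (ExteriorAlgebra.ιMulti ℤ (f + t)) (Function.update x₀ k₀ ((m : ℤ) • x₀ k₀)) := by
              rw [(ExteriorAlgebra.ιMulti ℤ (f + t)).map_update_smul]
          _ = 0 := by rw [hz]; exact (ExteriorAlgebra.ιMulti ℤ (f + t)).map_update_zero _ _
      rw [← natCast_zsmul, this]
  refine ⟨θ, ExteriorAlgebra.ιMulti_range ℤ (f + t) ⟨x₀, rfl⟩, aux_wedge_span x₀ hx₀span, ?_,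
    fun x hx => aux_wedge_span x hx⟩
  refine Nat.dvd_antisymm (addOrderOf_dvd_of_nsmul_eq_zero hsmul) ?_
  have h2 := addOrderOf_map_dvd F.toAddMonoidHom θ
  have h3 : F.toAddMonoidHom θ = F θ := rfl
  rw [h3, hFθ, ZMod.addOrderOf_one] at h2
  exact h2
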